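/- Let T : X → X be a homeomorphism of a compact metric space, μ a T-invariant Borel probability measure, and U a finite Borel cover of X. Define h_μ⁺(S, W) = inf { h_μ(S, R) : R a finite Borel partition refining W }. Then h_μ⁻(T, U) = lim_{n→∞} (1/n) h_μ⁺(Tⁿ, ⋁_{i=0}^{n-1}T⁻ⁱU), and in particular h_μ⁻(T,U) ≤ h_μ⁺(T,U). -/

import Mathlib

open MeasureTheory Set Filter Topology

noncomputable section

/-- `U` is a cover of the whole space. -/
def IsCover {X : Type*} (U : Finset (Set X)) : Prop := ⋃₀ (U : Set (Set X)) = Set.univ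

/-- `R` refines `U`: every element of `R` is contained in some element of `U`. -/
def Refines {X : Type*} (R U : Finset (Set X)) : Prop := ∀ A ∈ R, ∃ B ∈ U, A ⊆ B

/-- `R` is a partition of the whole space. -/
def IsPartition {X : Type*} (R : Finset (Set X)) : Prop :=
  IsCover R ∧ ∀ A ∈ R, ∀ B ∈ R, A ≠ B → Disjoint A B

/-- `R` is a partition into Borel (measurable) sets. -/
def IsBorelPartition {X : Type*} [MeasurableSpace X] (R : Finset (Set X)) : Prop :=
  IsPartition R ∧ ∀ A ∈ R, MeasurableSet A

/-- Join of two finite families of sets: `U ∨ V = {A ∩ B}`. -/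
def coverJoin {X : Type*} (U V : Finset (Set X)) : Finset (Set X) :=
  letI := Classical.decEq (Set X)
  (U ×ˢ V).image fun p => p.1 ∩ p.2

/-- Preimage of a finite family of sets under a map. -/
def coverPre {Y X : Type*} (g : Y → X) (U : Finset (Set X)) : Finset (Set Y) :=
  letI := Classical.decEq (Set Y)
  U.image fun A => g ⁻¹' A

/-- `dynJoin T U n = ⋁_{i=0}^{n-1} T⁻ⁱ U`. -/
def dynJoin {X : Type*} (T : X → X) (U : Finset (Set X)) : ℕ → Finset (Set X)
  | 0 => {Set.univ}
  | n + 1 => coverJoin (dynJoin T U n) (coverPre (T^[n]) U)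

/-- Minimal cardinality of a subcover of `W`. -/
def coverNum {X : Type*} (W : Finset (Set X)) : ℕ :=
  sInf {n | ∃ F : Finset (Set X), F ⊆ W ∧ F.card = n ∧ ⋃₀ (F : Set (Set X)) = Set.univ}

/-- Shannon entropy of a finite family of sets (convention `0 log 0 = 0`). -/
def partEnt {X : Type*} [MeasurableSpace X] (μ : Measure X) (R : Finset (Set X)) : ℝ :=
  -∑ A ∈ R, (μ A).toReal * Real.log (μ A).toReal

/-- Entropy of a cover: infimum of entropies of Borel partitions refining it. -/
def coverEnt {X : Type*} [MeasurableSpace X] (μ : Measure X) (U : Finset (Set X)) : ℝ :=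
  sInf {h | ∃ R : Finset (Set X), IsBorelPartition R ∧ Refines R U ∧ h = partEnt μ R}

end

/-- `h_μ(S, R) = lim (1/m) H_μ(⋁_{j<m} S⁻ʲR)`, which by subadditivity equals the
infimum over `m ≥ 1`. -/
noncomputable def hMuPart {X : Type*} [MeasurableSpace X] (μ : Measure X) (S : X → X)
    (R : Finset (Set X)) : ℝ :=
  ⨅ m : {m : ℕ // 1 ≤ m}, partEnt μ (dynJoin S R m.1) / m.1

/-- `h_μ⁺(S, W) = inf { h_μ(S, R) : R a finite Borel partition refining W }`. -/
noncomputable def hMuPlus {X : Type*} [MeasurableSpace X] (μ : Measure X) (S : X → X)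
    (W : Finset (Set X)) : ℝ :=
  sInf {h | ∃ R : Finset (Set X), IsBorelPartition R ∧ Refines R W ∧ h = hMuPart μ S R}

section Chunk1
open Set

variable {X Y : Type*}

lemma mem_coverJoin {U V : Finset (Set X)} {C : Set X} :
    C ∈ coverJoin U V ↔ ∃ a ∈ U, ∃ b ∈ V, a ∩ b = C := by
  classical
  simp only [coverJoin, Finset.mem_image, Finset.mem_product, Prod.exists]
  constructor
  · rintro ⟨a, b, ⟨ha, hb⟩, rfl⟩; exact ⟨a, ha, b, hb, rfl⟩
  · rintro ⟨a, ha, b, hb, rfl⟩; exact ⟨a, b, ⟨ha, hb⟩, rfl⟩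

lemma mem_coverPre {g : Y → X} {U : Finset (Set X)} {C : Set Y} :
    C ∈ coverPre g U ↔ ∃ A ∈ U, g ⁻¹' A = C := by
  classical
  simp [coverPre, Finset.mem_image]

lemma coverJoin_singleton_left {W : Finset (Set X)} : coverJoin {Set.univ} W = W := by
  ext C
  simp only [mem_coverJoin, Finset.mem_singleton]
  constructor
  · rintro ⟨a, rfl, b, hb, rfl⟩; simpa using hb
  · intro h; exact ⟨Set.univ, rfl, C, h, by simp⟩

lemma coverJoin_singleton_right {W : Finset (Set X)} : coverJoin W {Set.univ} = W := by
  ext C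
  simp only [mem_coverJoin, Finset.mem_singleton]
  constructor
  · rintro ⟨a, ha, b, rfl, rfl⟩; simpa using ha
  · intro h; exact ⟨C, h, Set.univ, rfl, by simp⟩

lemma coverJoin_assoc {A B C : Finset (Set X)} :
    coverJoin (coverJoin A B) C = coverJoin A (coverJoin B C) := by
  ext D
  simp only [mem_coverJoin]
  constructor
  · rintro ⟨ab, ⟨a, ha, b, hb, rfl⟩, c, hc, rfl⟩
    exact ⟨a, ha, b ∩ c, ⟨b, hb, c, hc, rfl⟩, (Set.inter_assoc a b c).symm⟩
  · rintro ⟨a, ha, bc, ⟨b, hb, c, hc, rfl⟩, rfl⟩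
    exact ⟨a ∩ b, ⟨a, ha, b, hb, rfl⟩, c, hc, Set.inter_assoc a b c⟩

lemma coverPre_coverJoin {g : Y → X} {U V : Finset (Set X)} :
    coverPre g (coverJoin U V) = coverJoin (coverPre g U) (coverPre g V) := by
  ext C
  simp only [mem_coverJoin, mem_coverPre]
  constructor
  · rintro ⟨A, ⟨a, ha, b, hb, rfl⟩, rfl⟩
    exact ⟨_, ⟨a, ha, rfl⟩, _, ⟨b, hb, rfl⟩, (Set.preimage_inter).symm⟩
  · rintro ⟨A, ⟨a, ha, rfl⟩, B, ⟨b, hb, rfl⟩, rfl⟩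
    exact ⟨a ∩ b, ⟨a, ha, b, hb, rfl⟩, Set.preimage_inter⟩

lemma coverPre_comp {f : Y → X} {g : X → X} {U : Finset (Set X)} :
    coverPre f (coverPre g U) = coverPre (g ∘ f) U := by
  ext C
  simp only [mem_coverPre]
  constructor
  · rintro ⟨A, ⟨B, hB, rfl⟩, rfl⟩; exact ⟨B, hB, rfl⟩
  · rintro ⟨B, hB, rfl⟩; exact ⟨_, ⟨B, hB, rfl⟩, rfl⟩

lemma dynJoin_one {T : X → X} {W : Finset (Set X)} : dynJoin T W 1 = W := by
  show coverJoin (dynJoin T W 0) (coverPre (T^[0]) W) = W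
  have h0 : coverPre (T^[0]) W = W := by
    ext C; simp [mem_coverPre]
  rw [show dynJoin T W 0 = {Set.univ} from rfl, h0, coverJoin_singleton_left]

lemma dynJoin_add {T : X → X} {W : Finset (Set X)} (a b : ℕ) :
    dynJoin T W (a + b) = coverJoin (dynJoin T W a) (coverPre (T^[a]) (dynJoin T W b)) := by
  induction b with
  | zero =>
    have : coverPre (T^[a]) (dynJoin T W 0) = {Set.univ} := by
      ext C; simp [mem_coverPre, dynJoin, eq_comm]
    simp [this, coverJoin_singleton_right]
  | succ b ih =>
    have h1 : dynJoin T W (a + (b+1)) = coverJoin (dynJoin T W (a+b)) (coverPre (T^[a+b]) W) := rfl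
    have h2 : coverPre (T^[a+b]) W = coverPre (T^[a]) (coverPre (T^[b]) W) := by
      rw [coverPre_comp, ← Function.iterate_add, Nat.add_comm b a]
    rw [h1, ih, h2, coverJoin_assoc, ← coverPre_coverJoin]
    rfl

end Chunk1
section Chunk2
open Set

variable {X Y : Type*}

lemma isCover_coverJoin {U V : Finset (Set X)} (hU : IsCover U) (hV : IsCover V) :
    IsCover (coverJoin U V) := by
  ext x
  simp only [Set.mem_sUnion, Finset.mem_coe, mem_univ, iff_true]
  have hx1 : x ∈ ⋃₀ (U : Set (Set X)) := hU ▸ mem_univ x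
  have hx2 : x ∈ ⋃₀ (V : Set (Set X)) := hV ▸ mem_univ x
  obtain ⟨a, ha, hxa⟩ := hx1
  obtain ⟨b, hb, hxb⟩ := hx2
  exact ⟨a ∩ b, mem_coverJoin.2 ⟨a, ha, b, hb, rfl⟩, hxa, hxb⟩

lemma isCover_coverPre {g : Y → X} {U : Finset (Set X)} (hU : IsCover U) :
    IsCover (coverPre g U) := by
  ext x
  simp only [Set.mem_sUnion, Finset.mem_coe, mem_univ, iff_true]
  have hx : g x ∈ ⋃₀ (U : Set (Set X)) := hU ▸ mem_univ (g x)
  obtain ⟨a, ha, hxa⟩ := hx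
  exact ⟨g ⁻¹' a, mem_coverPre.2 ⟨a, ha, rfl⟩, hxa⟩

lemma isCover_dynJoin {T : X → X} {U : Finset (Set X)} (hU : IsCover U) (n : ℕ) :
    IsCover (dynJoin T U n) := by
  induction n with
  | zero => simp [dynJoin, IsCover]
  | succ n ih => exact isCover_coverJoin ih (isCover_coverPre hU)

lemma meas_coverJoin [MeasurableSpace X] {U V : Finset (Set X)}
    (hU : ∀ A ∈ U, MeasurableSet A) (hV : ∀ A ∈ V, MeasurableSet A) :
    ∀ A ∈ coverJoin U V, MeasurableSet A := by
  intro A hA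
  obtain ⟨a, ha, b, hb, rfl⟩ := mem_coverJoin.1 hA
  exact (hU a ha).inter (hV b hb)

lemma meas_coverPre [MeasurableSpace X] [MeasurableSpace Y] {g : Y → X}
    (hg : Measurable g) {U : Finset (Set X)} (hU : ∀ A ∈ U, MeasurableSet A) :
    ∀ A ∈ coverPre g U, MeasurableSet A := by
  intro A hA
  obtain ⟨a, ha, rfl⟩ := mem_coverPre.1 hA
  exact hg (hU a ha)

lemma meas_dynJoin [MeasurableSpace X] {T : X → X} (hT : Measurable T) {U : Finset (Set X)}
    (hU : ∀ A ∈ U, MeasurableSet A) (n : ℕ) :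
    ∀ A ∈ dynJoin T U n, MeasurableSet A := by
  induction n with
  | zero => intro A hA; simp only [dynJoin, Finset.mem_singleton] at hA; simp [hA]
  | succ n ih => exact meas_coverJoin ih (meas_coverPre (hT.iterate n) hU)

lemma isPartition_coverJoin {P Q : Finset (Set X)} (hP : IsPartition P) (hQ : IsPartition Q) :
    IsPartition (coverJoin P Q) := by
  refine ⟨isCover_coverJoin hP.1 hQ.1, ?_⟩
  intro A hA B hB hAB
  obtain ⟨a, ha, b, hb, rfl⟩ := mem_coverJoin.1 hA
  obtain ⟨a', ha', b', hb', rfl⟩ := mem_coverJoin.1 hB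
  by_cases haa : a = a'
  · subst haa
    have hbb : b ≠ b' := fun h => hAB (by rw [h])
    exact (hQ.2 b hb b' hb' hbb).mono inter_subset_right inter_subset_right
  · exact (hP.2 a ha a' ha' haa).mono inter_subset_left inter_subset_left

lemma isPartition_coverPre {g : Y → X} {P : Finset (Set X)} (hP : IsPartition P) :
    IsPartition (coverPre g P) := by
  refine ⟨isCover_coverPre hP.1, ?_⟩
  intro A hA B hB hAB
  obtain ⟨a, ha, rfl⟩ := mem_coverPre.1 hA
  obtain ⟨b, hb, rfl⟩ := mem_coverPre.1 hB
  have hab : a ≠ b := fun h => hAB (by rw [h])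
  exact Disjoint.preimage g (hP.2 a ha b hb hab)

lemma isBorelPartition_coverJoin [MeasurableSpace X] {P Q : Finset (Set X)}
    (hP : IsBorelPartition P) (hQ : IsBorelPartition Q) : IsBorelPartition (coverJoin P Q) :=
  ⟨isPartition_coverJoin hP.1 hQ.1, meas_coverJoin hP.2 hQ.2⟩

lemma isBorelPartition_coverPre [MeasurableSpace X] [MeasurableSpace Y] {g : Y → X}
    (hg : Measurable g) {P : Finset (Set X)} (hP : IsBorelPartition P) :
    IsBorelPartition (coverPre g P) :=
  ⟨isPartition_coverPre hP.1, meas_coverPre hg hP.2⟩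

lemma isBorelPartition_dynJoin [MeasurableSpace X] {T : X → X} (hT : Measurable T)
    {P : Finset (Set X)} (hP : IsBorelPartition P) (n : ℕ) :
    IsBorelPartition (dynJoin T P n) := by
  induction n with
  | zero =>
    refine ⟨⟨?_, ?_⟩, ?_⟩
    · simp [dynJoin, IsCover]
    · intro A hA B hB hAB
      simp only [dynJoin, Finset.mem_singleton] at hA hB
      exact absurd (hA.trans hB.symm) hAB
    · intro A hA; simp only [dynJoin, Finset.mem_singleton] at hA; simp [hA]
  | succ n ih => exact isBorelPartition_coverJoin ih (isBorelPartition_coverPre (hT.iterate n) hP)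

lemma refines_trans {A B C : Finset (Set X)} (h1 : Refines A B) (h2 : Refines B C) :
    Refines A C := by
  intro a ha
  obtain ⟨b, hb, hab⟩ := h1 a ha
  obtain ⟨c, hc, hbc⟩ := h2 b hb
  exact ⟨c, hc, hab.trans hbc⟩

lemma refines_refl {A : Finset (Set X)} : Refines A A := fun a ha => ⟨a, ha, subset_rfl⟩

lemma refines_coverJoin {A B A' B' : Finset (Set X)} (h1 : Refines A A') (h2 : Refines B B') :
    Refines (coverJoin A B) (coverJoin A' B') := by
  intro C hC
  obtain ⟨a, ha, b, hb, rfl⟩ := mem_coverJoin.1 hC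
  obtain ⟨a', ha', haa⟩ := h1 a ha
  obtain ⟨b', hb', hbb⟩ := h2 b hb
  exact ⟨a' ∩ b', mem_coverJoin.2 ⟨a', ha', b', hb', rfl⟩, inter_subset_inter haa hbb⟩

lemma refines_coverPre {g : Y → X} {A B : Finset (Set X)} (h : Refines A B) :
    Refines (coverPre g A) (coverPre g B) := by
  intro C hC
  obtain ⟨a, ha, rfl⟩ := mem_coverPre.1 hC
  obtain ⟨b, hb, hab⟩ := h a ha
  exact ⟨g ⁻¹' b, mem_coverPre.2 ⟨b, hb, rfl⟩, preimage_mono hab⟩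

/-- If `R` refines `⋁_{i<n} T⁻ⁱU` then `⋁_{j<m}(Tⁿ)⁻ʲR` refines `⋁_{i<nm} T⁻ⁱU`. -/
lemma dynJoin_iterate_refines {T : X → X} {U R : Finset (Set X)} {n : ℕ}
    (h : Refines R (dynJoin T U n)) (m : ℕ) :
    Refines (dynJoin (T^[n]) R m) (dynJoin T U (n * m)) := by
  induction m with
  | zero => simpa [dynJoin] using (refines_refl : Refines (dynJoin T U 0) _)
  | succ m ih =>
    have h1 : dynJoin (T^[n]) R (m+1)
        = coverJoin (dynJoin (T^[n]) R m) (coverPre ((T^[n])^[m]) R) := rfl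
    have h2 : dynJoin T U (n * (m+1))
        = coverJoin (dynJoin T U (n*m)) (coverPre (T^[n*m]) (dynJoin T U n)) := by
      rw [Nat.mul_succ, dynJoin_add]
    rw [h1, h2]
    refine refines_coverJoin ih ?_
    rw [← Function.iterate_mul]
    exact refines_coverPre h

end Chunk2
section Chunk3
open Set MeasureTheory

variable {X : Type*} [MeasurableSpace X] {μ : Measure X} [IsProbabilityMeasure μ]

lemma sum_measure_inter {Q : Finset (Set X)} (hQ : IsBorelPartition Q) {s : Set X}
    (hs : MeasurableSet s) :
    ∑ b ∈ Q, (μ (s ∩ b)).toReal = (μ s).toReal := by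
  have hdisj : (Q : Set (Set X)).PairwiseDisjoint (fun b => s ∩ b) := by
    intro a ha b hb hab
    exact (hQ.1.2 a ha b hb hab).mono inter_subset_right inter_subset_right
  have hmeas : ∀ b ∈ Q, MeasurableSet (s ∩ b) := fun b hb => hs.inter (hQ.2 b hb)
  have hunion : (⋃ b ∈ Q, s ∩ b) = s := by
    apply Set.Subset.antisymm
    · exact Set.iUnion₂_subset fun b _ => inter_subset_left
    · intro x hx
      have : x ∈ ⋃₀ (Q : Set (Set X)) := hQ.1.1 ▸ mem_univ x
      obtain ⟨b, hb, hxb⟩ := this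
      exact Set.mem_biUnion hb ⟨hx, hxb⟩
  have := measure_biUnion_finset hdisj hmeas (μ := μ)
  rw [hunion] at this
  rw [this, ENNReal.toReal_sum (fun b _ => measure_ne_top μ _)]

lemma sum_measure_partition {Q : Finset (Set X)} (hQ : IsBorelPartition Q) :
    ∑ b ∈ Q, (μ b).toReal = 1 := by
  have := sum_measure_inter (μ := μ) hQ MeasurableSet.univ
  simpa using this

lemma measure_toReal_le_one {A : Set X} : (μ A).toReal ≤ 1 := by
  have : μ A ≤ 1 := prob_le_one
  exact ENNReal.toReal_le_of_le_ofReal zero_le_one (by simpa using this)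

lemma partEnt_nonneg (R : Finset (Set X)) : 0 ≤ partEnt μ R := by
  rw [partEnt, neg_nonneg]
  apply Finset.sum_nonpos
  intro A _
  have h0 : 0 ≤ (μ A).toReal := ENNReal.toReal_nonneg
  have h1 : Real.log (μ A).toReal ≤ 0 := Real.log_nonpos h0 measure_toReal_le_one
  exact mul_nonpos_of_nonneg_of_nonpos h0 h1

lemma hMuPart_nonneg (S : X → X) (R : Finset (Set X)) : 0 ≤ hMuPart μ S R := by
  apply Real.iInf_nonneg
  intro m
  exact div_nonneg (partEnt_nonneg _) (by positivity)

/-- Sums over a `Finset.image` when the function is injective off a value where `g` vanishes. -/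
lemma sum_image_eq {α β : Type*} [DecidableEq β] (s : Finset α) (f : α → β) (g : β → ℝ)
    (e : β) (hg : g e = 0)
    (hinj : ∀ p ∈ s, ∀ q ∈ s, f p = f q → f p ≠ e → p = q) :
    (∑ C ∈ s.image f, g C) = ∑ p ∈ s, g (f p) := by
  classical
  set s' := s.filter (fun p => f p ≠ e) with hs'
  have h1 : ∑ p ∈ s, g (f p) = ∑ p ∈ s', g (f p) := by
    refine (Finset.sum_subset (Finset.filter_subset _ _) ?_).symm
    intro p hp hps'
    have : f p = e := by
      by_contra h
      exact hps' (Finset.mem_filter.2 ⟨hp, h⟩)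
    rw [this, hg]
  have h2 : ∑ C ∈ s'.image f, g C = ∑ p ∈ s', g (f p) := by
    apply Finset.sum_image
    intro p hp q hq hpq
    have hp' := Finset.mem_filter.1 hp
    exact hinj p hp'.1 q (Finset.mem_filter.1 hq).1 hpq hp'.2
  have h3 : ∑ C ∈ s.image f, g C = ∑ C ∈ s'.image f, g C := by
    refine (Finset.sum_subset (Finset.image_subset_image (Finset.filter_subset _ _)) ?_).symm
    intro C hC hC'
    obtain ⟨p, hp, rfl⟩ := Finset.mem_image.1 hC
    have : f p = e := by
      by_contra h
      exact hC' (Finset.mem_image.2 ⟨p, Finset.mem_filter.2 ⟨hp, h⟩, rfl⟩)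
    rw [this, hg]
  rw [h3, h2, h1]

/-- Tangent-line inequality for `x log x` at `y > 0`. -/
lemma tangent_ineq {x y : ℝ} (hx : 0 ≤ x) (hy : 0 < y) :
    y * Real.log y + (Real.log y + 1) * (x - y) ≤ x * Real.log x := by
  rcases eq_or_lt_of_le hx with h | hxpos
  · rw [← h]
    ring_nf
    nlinarith [Real.log_le_sub_one_of_pos hy]
  · have h1 : Real.log (y / x) ≤ y / x - 1 := Real.log_le_sub_one_of_pos (by positivity)
    have h2 : Real.log (y / x) = Real.log y - Real.log x := Real.log_div hy.ne' hxpos.ne'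
    have h3 : x * (Real.log y - Real.log x) ≤ y - x := by
      rw [← h2]
      calc x * Real.log (y/x) ≤ x * (y/x - 1) := by
            exact mul_le_mul_of_nonneg_left h1 hx
        _ = y - x := by field_simp
    nlinarith

end Chunk3
section Chunk4
open Set MeasureTheory

variable {X : Type*} [MeasurableSpace X] {μ : Measure X} [IsProbabilityMeasure μ]

lemma toReal_eq_zero {A : Set X} (h : (μ A).toReal = 0) : μ A = 0 := by
  rcases ENNReal.toReal_eq_zero_iff _ |>.1 h with h' | h'
  · exact h'
  · exact absurd h' (measure_ne_top μ A)

lemma partEnt_coverJoin_le {P Q : Finset (Set X)}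
    (hP : IsBorelPartition P) (hQ : IsBorelPartition Q) :
    partEnt μ (coverJoin P Q) ≤ partEnt μ P + partEnt μ Q := by
  classical
  set φ : Set X → ℝ := fun C => (μ C).toReal * Real.log (μ C).toReal with hφ
  have himg : ∑ C ∈ coverJoin P Q, φ C = ∑ p ∈ P ×ˢ Q, φ (p.1 ∩ p.2) := by
    unfold coverJoin
    refine sum_image_eq _ _ _ ∅ (by simp [hφ]) ?_
    intro p hp q hq hfe hne
    obtain ⟨x, hx⟩ := Set.nonempty_iff_ne_empty.2 hne
    have hp' := Finset.mem_product.1 hp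
    have hq' := Finset.mem_product.1 hq
    have hx' : x ∈ q.1 ∩ q.2 := hfe ▸ hx
    have h1 : p.1 = q.1 := by
      by_contra h
      exact Set.disjoint_left.1 (hP.1.2 p.1 hp'.1 q.1 hq'.1 h) hx.1 hx'.1
    have h2 : p.2 = q.2 := by
      by_contra h
      exact Set.disjoint_left.1 (hQ.1.2 p.2 hp'.2 q.2 hq'.2 h) hx.2 hx'.2
    exact Prod.ext h1 h2
  have hterm : ∀ p ∈ P ×ˢ Q,
      (μ (p.1 ∩ p.2)).toReal * Real.log (μ p.1).toReal
        + (μ (p.1 ∩ p.2)).toReal * Real.log (μ p.2).toReal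
        + (μ (p.1 ∩ p.2)).toReal - (μ p.1).toReal * (μ p.2).toReal
      ≤ φ (p.1 ∩ p.2) := by
    rintro ⟨a, b⟩ hp
    simp only
    set x := (μ (a ∩ b)).toReal with hx
    set pa := (μ a).toReal with hpa
    set pb := (μ b).toReal with hpb
    have hx0 : 0 ≤ x := ENNReal.toReal_nonneg
    by_cases hpa0 : pa = 0
    · have hμa : μ a = 0 := toReal_eq_zero hpa0
      have : μ (a ∩ b) = 0 := le_antisymm (le_trans (measure_mono inter_subset_left) hμa.le) zero_le
      have hx' : x = 0 := by rw [hx, this, ENNReal.toReal_zero]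
      simp [hφ, hx', hpa0, this]
    by_cases hpb0 : pb = 0
    · have hμb : μ b = 0 := toReal_eq_zero hpb0
      have : μ (a ∩ b) = 0 := le_antisymm (le_trans (measure_mono inter_subset_right) hμb.le) zero_le
      have hx' : x = 0 := by rw [hx, this, ENNReal.toReal_zero]
      simp [hφ, hx', hpb0, this]
    have hpa' : 0 < pa := lt_of_le_of_ne ENNReal.toReal_nonneg (Ne.symm hpa0)
    have hpb' : 0 < pb := lt_of_le_of_ne ENNReal.toReal_nonneg (Ne.symm hpb0)
    have htan := tangent_ineq hx0 (mul_pos hpa' hpb')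
    rw [Real.log_mul hpa0 hpb0] at htan
    have hring : pa * pb * (Real.log pa + Real.log pb)
        + (Real.log pa + Real.log pb + 1) * (x - pa * pb)
        = x * Real.log pa + x * Real.log pb + x - pa * pb := by ring
    have hgoal : φ (a ∩ b) = x * Real.log x := rfl
    rw [hgoal]
    linarith
  have hS1 : ∑ p ∈ P ×ˢ Q, (μ (p.1 ∩ p.2)).toReal * Real.log (μ p.1).toReal
      = ∑ a ∈ P, φ a := by
    rw [Finset.sum_product]
    refine Finset.sum_congr rfl fun a ha => ?_
    dsimp only
    rw [← Finset.sum_mul, sum_measure_inter hQ (hP.2 a ha)]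
  have hS2 : ∑ p ∈ P ×ˢ Q, (μ (p.1 ∩ p.2)).toReal * Real.log (μ p.2).toReal
      = ∑ b ∈ Q, φ b := by
    rw [Finset.sum_product, Finset.sum_comm]
    refine Finset.sum_congr rfl fun b hb => ?_
    dsimp only
    have : ∀ a ∈ P, (μ (a ∩ b)).toReal * Real.log (μ b).toReal
        = (μ (b ∩ a)).toReal * Real.log (μ b).toReal := by
      intro a _; rw [Set.inter_comm]
    rw [Finset.sum_congr rfl this, ← Finset.sum_mul, sum_measure_inter hP (hQ.2 b hb)]
  have hS3 : ∑ p ∈ P ×ˢ Q, (μ (p.1 ∩ p.2)).toReal = 1 := by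
    rw [Finset.sum_product]
    simp only
    have : ∀ a ∈ P, ∑ b ∈ Q, (μ (a ∩ b)).toReal = (μ a).toReal := by
      intro a ha; exact sum_measure_inter hQ (hP.2 a ha)
    rw [Finset.sum_congr rfl this, sum_measure_partition hP]
  have hS4 : ∑ p ∈ P ×ˢ Q, (μ p.1).toReal * (μ p.2).toReal = 1 := by
    rw [Finset.sum_product]
    simp only
    have : ∀ a ∈ P, ∑ b ∈ Q, (μ a).toReal * (μ b).toReal = (μ a).toReal := by
      intro a _
      rw [← Finset.mul_sum, sum_measure_partition hQ, mul_one]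
    rw [Finset.sum_congr rfl this, sum_measure_partition hP]
  have hsum : ∑ a ∈ P, φ a + ∑ b ∈ Q, φ b ≤ ∑ p ∈ P ×ˢ Q, φ (p.1 ∩ p.2) := by
    have h := Finset.sum_le_sum hterm
    have hsplit : ∑ p ∈ P ×ˢ Q, ((μ (p.1 ∩ p.2)).toReal * Real.log (μ p.1).toReal
        + (μ (p.1 ∩ p.2)).toReal * Real.log (μ p.2).toReal
        + (μ (p.1 ∩ p.2)).toReal - (μ p.1).toReal * (μ p.2).toReal)
        = ∑ a ∈ P, φ a + ∑ b ∈ Q, φ b + 1 - 1 := by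
      rw [Finset.sum_sub_distrib, Finset.sum_add_distrib, Finset.sum_add_distrib,
        hS1, hS2, hS3, hS4]
    rw [hsplit] at h
    linarith
  have hPQ : partEnt μ (coverJoin P Q) = -∑ p ∈ P ×ˢ Q, φ (p.1 ∩ p.2) := by
    rw [partEnt, himg]
  rw [hPQ, partEnt, partEnt]
  linarith

end Chunk4
section Chunk5
open Set MeasureTheory

variable {X : Type*} [MeasurableSpace X] {μ : Measure X} [IsProbabilityMeasure μ]
variable {T : X → X}

lemma measure_preimage_iterate (hTm : Measurable T)
    (hinv : ∀ A : Set X, MeasurableSet A → μ (T ⁻¹' A) = μ A) (k : ℕ)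
    {A : Set X} (hA : MeasurableSet A) : μ ((T^[k]) ⁻¹' A) = μ A := by
  induction k generalizing A with
  | zero => simp
  | succ k ih =>
    rw [Function.iterate_succ']
    have : (T ∘ T^[k]) ⁻¹' A = (T^[k]) ⁻¹' (T ⁻¹' A) := rfl
    rw [this, ih (hTm hA), hinv A hA]

lemma partEnt_coverPre_iterate (hTm : Measurable T) (hsurj : Function.Surjective T)
    (hinv : ∀ A : Set X, MeasurableSet A → μ (T ⁻¹' A) = μ A) (k : ℕ)
    {P : Finset (Set X)} (hPm : ∀ A ∈ P, MeasurableSet A) :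
    partEnt μ (coverPre (T^[k]) P) = partEnt μ P := by
  classical
  unfold partEnt coverPre
  congr 1
  erw [Finset.sum_image (g := fun A => T^[k] ⁻¹' A) (fun A _ B _ h =>
    (Set.preimage_injective.2 (hsurj.iterate k)) h)]
  refine Finset.sum_congr rfl fun A hA => ?_
  rw [measure_preimage_iterate hTm hinv k (hPm A hA)]

lemma partEnt_singleton_univ : partEnt μ ({Set.univ} : Finset (Set X)) = 0 := by
  simp [partEnt]

lemma partEnt_dynJoin_subadd (hTm : Measurable T) (hsurj : Function.Surjective T)
    (hinv : ∀ A : Set X, MeasurableSet A → μ (T ⁻¹' A) = μ A)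
    {R : Finset (Set X)} (hR : IsBorelPartition R) (m k : ℕ) :
    partEnt μ (dynJoin T R (m + k)) ≤ partEnt μ (dynJoin T R m) + partEnt μ (dynJoin T R k) := by
  rw [dynJoin_add]
  have h1 := partEnt_coverJoin_le (μ := μ) (isBorelPartition_dynJoin hTm hR m)
    (isBorelPartition_coverPre (hTm.iterate m) (isBorelPartition_dynJoin hTm hR k))
  have h2 := partEnt_coverPre_iterate (μ := μ) hTm hsurj hinv m
    (isBorelPartition_dynJoin hTm hR k).2
  linarith

lemma partEnt_dynJoin_mul (hTm : Measurable T) (hsurj : Function.Surjective T)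
    (hinv : ∀ A : Set X, MeasurableSet A → μ (T ⁻¹' A) = μ A)
    {R : Finset (Set X)} (hR : IsBorelPartition R) (m k : ℕ) :
    partEnt μ (dynJoin T R (m * k)) ≤ k * partEnt μ (dynJoin T R m) := by
  induction k with
  | zero => simp [dynJoin, partEnt_singleton_univ]
  | succ k ih =>
    have h1 : m * (k + 1) = m * k + m := by ring
    rw [h1]
    have h2 := partEnt_dynJoin_subadd hTm hsurj hinv hR (m * k) m
    push_cast
    nlinarith [partEnt_nonneg (μ := μ) (dynJoin T R m)]
end Chunk5
section Chunk6
open Set MeasureTheory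

variable {X : Type*}

/-- Disjointify a list of sets. -/
def plist : List (Set X) → List (Set X)
  | [] => []
  | A :: l => (A \ ⋃₀ {s | s ∈ l}) :: plist l

lemma plist_subset : ∀ (l : List (Set X)), ∀ B ∈ plist l, ∃ A ∈ l, B ⊆ A
  | [], B, hB => by simp [plist] at hB
  | A :: l, B, hB => by
    rcases List.mem_cons.1 hB with h | h
    · exact ⟨A, List.mem_cons_self, h ▸ Set.diff_subset⟩
    · obtain ⟨A', hA', hBA⟩ := plist_subset l B h
      exact ⟨A', List.mem_cons_of_mem _ hA', hBA⟩

lemma plist_sUnion : ∀ l : List (Set X), ⋃₀ {s | s ∈ plist l} = ⋃₀ {s | s ∈ l}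
  | [] => rfl
  | A :: l => by
    have : {s | s ∈ plist (A :: l)} = insert (A \ ⋃₀ {s | s ∈ l}) {s | s ∈ plist l} := by
      ext s; simp [plist]
    rw [this, Set.sUnion_insert, plist_sUnion l]
    have : {s : Set X | s ∈ A :: l} = insert A {s | s ∈ l} := by
      ext s; simp
    rw [this, Set.sUnion_insert, Set.diff_union_self]

lemma plist_pairwise : ∀ l : List (Set X), (plist l).Pairwise Disjoint
  | [] => List.Pairwise.nil
  | A :: l => by
    refine List.Pairwise.cons ?_ (plist_pairwise l)
    intro B hB
    obtain ⟨A', hA', hBA⟩ := plist_subset l B hB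
    have : B ⊆ ⋃₀ {s | s ∈ l} := hBA.trans (Set.subset_sUnion_of_mem hA')
    exact Set.disjoint_of_subset_right this disjoint_sdiff_left

lemma plist_measurable [MeasurableSpace X] : ∀ l : List (Set X),
    (∀ A ∈ l, MeasurableSet A) → ∀ B ∈ plist l, MeasurableSet B
  | [], _, B, hB => by simp [plist] at hB
  | A :: l, h, B, hB => by
    rcases List.mem_cons.1 hB with hBeq | hB'
    · subst hBeq
      refine (h A (List.mem_cons_self)).diff ?_
      have hfin : {s : Set X | s ∈ l}.Finite := l.finite_toSet
      exact MeasurableSet.sUnion hfin.countable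
        (fun s hs => h s (List.mem_cons_of_mem _ hs))
    · exact plist_measurable l (fun A' hA' => h A' (List.mem_cons_of_mem _ hA')) B hB'

lemma exists_borel_partition [MeasurableSpace X] {W : Finset (Set X)}
    (hWc : IsCover W) (hWm : ∀ A ∈ W, MeasurableSet A) :
    ∃ R : Finset (Set X), IsBorelPartition R ∧ Refines R W := by
  classical
  set l := W.toList with hl
  refine ⟨(plist l).toFinset, ⟨⟨?_, ?_⟩, ?_⟩, ?_⟩
  · -- cover
    have h1 : ((plist l).toFinset : Set (Set X)) = {s | s ∈ plist l} := by
      ext s; simp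
    rw [IsCover, h1, plist_sUnion]
    have h2 : {s : Set X | s ∈ l} = (W : Set (Set X)) := by
      ext s; simp [hl, Finset.mem_toList]
    rw [h2]; exact hWc
  · -- disjoint
    intro A hA B hB hAB
    have hA' : A ∈ plist l := List.mem_toFinset.1 hA
    have hB' : B ∈ plist l := List.mem_toFinset.1 hB
    exact List.Pairwise.forall (plist_pairwise l) hA' hB' hAB
  · -- measurable
    intro A hA
    exact plist_measurable l (fun A' hA' => hWm A' (Finset.mem_toList.1 hA')) A
      (List.mem_toFinset.1 hA)
  · -- refines
    intro A hA
    obtain ⟨A', hA', hAA⟩ := plist_subset l A (List.mem_toFinset.1 hA)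
    exact ⟨A', Finset.mem_toList.1 hA', hAA⟩

end Chunk6
section Chunk7
open Set MeasureTheory Filter Topology

variable {X : Type*} [MeasurableSpace X] {μ : Measure X} [IsProbabilityMeasure μ]

lemma bddBelow_partEnt_set (W : Finset (Set X)) :
    BddBelow {h | ∃ R : Finset (Set X), IsBorelPartition R ∧ Refines R W ∧ h = partEnt μ R} := by
  refine ⟨0, ?_⟩
  rintro h ⟨R, _, _, rfl⟩
  exact partEnt_nonneg R

lemma bddBelow_hMuPart_set (S : X → X) (W : Finset (Set X)) :
    BddBelow {h | ∃ R : Finset (Set X), IsBorelPartition R ∧ Refines R W ∧ h = hMuPart μ S R} := by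
  refine ⟨0, ?_⟩
  rintro h ⟨R, _, _, rfl⟩
  exact hMuPart_nonneg S R

lemma bddBelow_hMuPart_range (S : X → X) (R : Finset (Set X)) :
    BddBelow (Set.range fun m : {m : ℕ // 1 ≤ m} => partEnt μ (dynJoin S R m.1) / m.1) := by
  refine ⟨0, ?_⟩
  rintro x ⟨m, rfl⟩
  exact div_nonneg (partEnt_nonneg _) (by positivity)

lemma coverEnt_le_partEnt {W R : Finset (Set X)} (hR : IsBorelPartition R)
    (hRef : Refines R W) : coverEnt μ W ≤ partEnt μ R :=
  csInf_le (bddBelow_partEnt_set W) ⟨R, hR, hRef, rfl⟩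

lemma hMuPart_le_partEnt (S : X → X) (R : Finset (Set X)) :
    hMuPart μ S R ≤ partEnt μ R := by
  have h := ciInf_le (bddBelow_hMuPart_range (μ := μ) S R) ⟨1, le_refl 1⟩
  simp [dynJoin_one] at h
  exact h

lemma coverEnt_nonneg {W : Finset (Set X)} : 0 ≤ partEnt μ W := partEnt_nonneg W

lemma hMuPlus_le_coverEnt {W : Finset (Set X)} (hWc : IsCover W)
    (hWm : ∀ A ∈ W, MeasurableSet A) (S : X → X) :
    hMuPlus μ S W ≤ coverEnt μ W := by
  obtain ⟨R0, hR0, hRef0⟩ := exists_borel_partition hWc hWm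
  refine le_csInf ⟨partEnt μ R0, R0, hR0, hRef0, rfl⟩ ?_
  rintro h ⟨R, hR, hRef, rfl⟩
  calc hMuPlus μ S W ≤ hMuPart μ S R := csInf_le (bddBelow_hMuPart_set S W) ⟨R, hR, hRef, rfl⟩
    _ ≤ partEnt μ R := hMuPart_le_partEnt S R

lemma le_hMuPlus_iterate {T : X → X} (hTm : Measurable T) {U : Finset (Set X)}
    (hUc : IsCover U) (hUb : ∀ A ∈ U, MeasurableSet A) (n : ℕ) (c : ℝ)
    (hc : ∀ m : ℕ, 1 ≤ m → c ≤ coverEnt μ (dynJoin T U (n * m)) / m) :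
    c ≤ hMuPlus μ (T^[n]) (dynJoin T U n) := by
  obtain ⟨R0, hR0, hRef0⟩ := exists_borel_partition (isCover_dynJoin hUc n)
    (meas_dynJoin hTm hUb n)
  refine le_csInf ⟨hMuPart μ (T^[n]) R0, R0, hR0, hRef0, rfl⟩ ?_
  rintro h ⟨R, hR, hRef, rfl⟩
  refine le_ciInf ?_
  rintro ⟨m, hm⟩
  have h1 : coverEnt μ (dynJoin T U (n * m)) ≤ partEnt μ (dynJoin (T^[n]) R m) :=
    coverEnt_le_partEnt (isBorelPartition_dynJoin (hTm.iterate n) hR m)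
      (dynJoin_iterate_refines hRef m)
  have hm' : (0:ℝ) < (m:ℝ) := by exact_mod_cast hm
  calc c ≤ coverEnt μ (dynJoin T U (n * m)) / m := hc m hm
    _ ≤ partEnt μ (dynJoin (T^[n]) R m) / m := by gcongr

lemma refines_dynJoin_of_refines {T : X → X} {U R : Finset (Set X)} (h : Refines R U) (m : ℕ) :
    Refines (dynJoin T R m) (dynJoin T U m) := by
  have h1 : Refines R (dynJoin T U 1) := by rw [dynJoin_one]; exact h
  have h2 := dynJoin_iterate_refines h1 m
  rw [Function.iterate_one, Nat.one_mul] at h2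
  exact h2

lemma L_le_hMuPlus {T : X → X} (hTm : Measurable T) (hsurj : Function.Surjective T)
    (hinv : ∀ A : Set X, MeasurableSet A → μ (T ⁻¹' A) = μ A)
    {U : Finset (Set X)} (hUc : IsCover U) (hUb : ∀ A ∈ U, MeasurableSet A) {L : ℝ}
    (hL : Tendsto (fun n : ℕ => coverEnt μ (dynJoin T U n) / n) atTop (nhds L)) :
    L ≤ hMuPlus μ T U := by
  obtain ⟨R0, hR0, hRef0⟩ := exists_borel_partition hUc hUb
  refine le_csInf ⟨hMuPart μ T R0, R0, hR0, hRef0, rfl⟩ ?_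
  rintro h ⟨R, hR, hRef, rfl⟩
  refine le_ciInf ?_
  rintro ⟨m, hm⟩
  -- show L ≤ a_m / m where a_j = partEnt μ (dynJoin T R j)
  have hmul : Tendsto (fun k : ℕ => m * k) atTop atTop := by
    apply tendsto_atTop_mono (fun k => Nat.le_mul_of_pos_left k (by omega)) tendsto_id
  have hcomp : Tendsto (fun k : ℕ => coverEnt μ (dynJoin T U (m * k)) / (m * k : ℕ))
      atTop (nhds L) := hL.comp hmul
  refine le_of_tendsto hcomp ?_
  filter_upwards [eventually_ge_atTop 1] with k hk
  have hf : coverEnt μ (dynJoin T U (m * k)) ≤ partEnt μ (dynJoin T R (m * k)) :=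
    coverEnt_le_partEnt (isBorelPartition_dynJoin hTm hR (m * k))
      (refines_dynJoin_of_refines hRef (m * k))
  have hsub : partEnt μ (dynJoin T R (m * k)) ≤ k * partEnt μ (dynJoin T R m) :=
    partEnt_dynJoin_mul hTm hsurj hinv hR m k
  have hm' : (0:ℝ) < (m:ℝ) := by exact_mod_cast hm
  have hk' : (0:ℝ) < (k:ℝ) := by exact_mod_cast hk
  have hcast : ((m * k : ℕ) : ℝ) = (m : ℝ) * k := by push_cast; ring
  rw [hcast]
  calc coverEnt μ (dynJoin T U (m * k)) / ((m:ℝ) * k)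
      ≤ (k * partEnt μ (dynJoin T R m)) / ((m:ℝ) * k) :=
        (div_le_div_iff_of_pos_right (mul_pos hm' hk')).mpr (hf.trans hsub)
    _ = partEnt μ (dynJoin T R m) / m := by field_simp

end Chunk7
theorem stmt18 {X : Type*} [MetricSpace X] [CompactSpace X]
    [MeasurableSpace X] [BorelSpace X]
    (T : X ≃ₜ X)
    (μ : Measure X) [IsProbabilityMeasure μ]
    (hinv : ∀ A : Set X, MeasurableSet A → μ ((T : X → X) ⁻¹' A) = μ A)
    (U : Finset (Set X)) (hUc : IsCover U) (hUb : ∀ A ∈ U, MeasurableSet A)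
    (L : ℝ)
    (hL : Tendsto (fun n : ℕ =>
        coverEnt μ (dynJoin (T : X → X) U n) / n) atTop (nhds L)) :
    Tendsto (fun n : ℕ =>
        hMuPlus μ ((T : X → X)^[n]) (dynJoin (T : X → X) U n) / n) atTop (nhds L) ∧
    L ≤ hMuPlus μ (T : X → X) U := by
  have hTm : Measurable (T : X → X) := T.continuous.measurable
  have hsurj : Function.Surjective (T : X → X) := T.surjective
  constructor
  · rw [Metric.tendsto_atTop] at hL ⊢
    intro ε hε
    obtain ⟨N₁, hN₁⟩ := hL (ε / 2) (by linarith)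
    refine ⟨max N₁ 1, fun n hn => ?_⟩
    have hn1 : 1 ≤ n := le_trans (le_max_right _ _) hn
    have hnN : N₁ ≤ n := le_trans (le_max_left _ _) hn
    have hnpos : (0:ℝ) < (n:ℝ) := by exact_mod_cast hn1
    set F := hMuPlus μ ((T : X → X)^[n]) (dynJoin (T : X → X) U n) with hF
    -- upper bound
    have hup : F ≤ coverEnt μ (dynJoin (T : X → X) U n) :=
      hMuPlus_le_coverEnt (isCover_dynJoin hUc n) (meas_dynJoin hTm hUb n) _
    have hupr : F / n ≤ coverEnt μ (dynJoin (T : X → X) U n) / n :=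
      (div_le_div_iff_of_pos_right hnpos).mpr hup
    -- lower bound
    have hlow : (n : ℝ) * (L - ε / 2) ≤ F := by
      apply le_hMuPlus_iterate hTm hUc hUb
      intro m hm
      have hm' : (0:ℝ) < (m:ℝ) := by exact_mod_cast hm
      have hnm : N₁ ≤ n * m := le_trans hnN (Nat.le_mul_of_pos_right n (by omega))
      have h1 := hN₁ (n * m) hnm
      rw [Real.dist_eq, abs_lt] at h1
      have hcast : ((n * m : ℕ) : ℝ) = (n : ℝ) * m := by push_cast; ring
      rw [hcast] at h1
      have h2 : L - ε / 2 ≤ coverEnt μ (dynJoin (T : X → X) U (n * m)) / ((n:ℝ) * m) := by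
        linarith [h1.1]
      calc (n : ℝ) * (L - ε / 2)
          ≤ (n : ℝ) * (coverEnt μ (dynJoin (T : X → X) U (n * m)) / ((n:ℝ) * m)) := by
            exact mul_le_mul_of_nonneg_left h2 (le_of_lt hnpos)
        _ = coverEnt μ (dynJoin (T : X → X) U (n * m)) / m := by
            field_simp
    have hlowr : L - ε / 2 ≤ F / n := by
      rw [le_div_iff₀ hnpos]
      linarith [hlow]
    -- conclude
    have hfn := hN₁ n hnN
    rw [Real.dist_eq, abs_lt] at hfn
    rw [Real.dist_eq, abs_lt]
    constructor
    · linarith [hupr, hfn.1]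
    · linarith [hlowr]
  · exact L_le_hMuPlus hTm hsurj hinv hUc hUb hL
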